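/- Let q be an invertible scalar and let u, v be elements of a noncommutative algebra satisfying uv = q^2 vu. Then the q-exponential Exp_{q^{-2}}(u/(q-q^{-1})) · Exp_{q^{-2}}(v/(q-q^{-1})) equals Exp_{q^{-2}}((u+v)/(q-q^{-1})), where Exp_q(x) = Σ_{k≥0} x^k/(k)_q! and (k)_q = (1-q^k)/(1-q). -/

import Mathlib

/- STATEMENT 0: quantum exponential relation
`Exp_{q^{-2}}(u/(q-q⁻¹)) · Exp_{q^{-2}}(v/(q-q⁻¹)) = Exp_{q^{-2}}((u+v)/(q-q⁻¹))`
for `uv = q² vu`, formalized as an identity of formal power series (the formal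
grading variable `t` of `PowerSeries A` keeps track of the degree of the argument,
which is the standard rigorous meaning of these formal power-series identities). -/

noncomputable section

/-- The field `ℂ(q)` of rational functions, with `q` the formal parameter. -/
abbrev Kq : Type := RatFunc ℂ

/-- The formal parameter `q`. -/
def qq : Kq := RatFunc.X

/-- The q-number `(k)_p = (1-p^k)/(1-p)`. -/
def qNum (p : Kq) (k : ℕ) : Kq := (1 - p ^ k) / (1 - p)

/-- The q-factorial `(k)_p! = ∏_{j=1}^k (j)_p`. -/
def qFact (p : Kq) (k : ℕ) : Kq := ∏ j ∈ Finset.range k, qNum p (j + 1)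

/-- Coefficient of `x^k` in `Exp_{q^{-2}}(x/(q-q⁻¹))`. -/
def qExpCoeff (k : ℕ) : Kq := (qFact ((qq ^ 2)⁻¹) k * (qq - qq⁻¹) ^ k)⁻¹

/-- The q-exponential `Exp_{q^{-2}}(x/(q-q⁻¹))` of an algebra element `x`,
as a formal power series whose degree-`k` coefficient is `x^k/((k)_{q^{-2}}! (q-q⁻¹)^k)`. -/
def qExp {A : Type} [Ring A] [Algebra Kq A] (x : A) : PowerSeries A :=
  PowerSeries.mk fun k => qExpCoeff k • x ^ k

lemma qq_pow_ne_one (n : ℕ) (hn : n ≠ 0) : qq ^ n ≠ 1 := by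
  intro h
  have : (algebraMap (Polynomial ℂ) Kq) (Polynomial.X ^ n) =
      (algebraMap (Polynomial ℂ) Kq) 1 := by
    simpa [map_pow, RatFunc.algebraMap_X, qq] using h
  have h2 := RatFunc.algebraMap_injective ℂ this
  have hd := congrArg Polynomial.natDegree h2
  simp [Polynomial.natDegree_X_pow] at hd
  exact hn hd

lemma qq_ne_zero : qq ≠ 0 := by
  simpa [qq] using RatFunc.X_ne_zero (K := ℂ)

abbrev pp : Kq := (qq ^ 2)⁻¹

lemma pp_pow_eq (n : ℕ) : pp ^ n = (qq ^ (2 * n))⁻¹ := by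
  rw [inv_pow, ← pow_mul]

lemma pp_pow_ne_one (n : ℕ) (hn : n ≠ 0) : pp ^ n ≠ 1 := by
  intro h
  rw [pp_pow_eq, inv_eq_one] at h
  exact qq_pow_ne_one (2 * n) (by omega) h

lemma one_sub_pp_pow_ne_zero (n : ℕ) (hn : n ≠ 0) : 1 - pp ^ n ≠ 0 := by
  intro h
  exact pp_pow_ne_one n hn (sub_eq_zero.mp h).symm

lemma qNum_ne_zero (k : ℕ) : qNum pp (k + 1) ≠ 0 := by
  unfold qNum
  exact div_ne_zero (one_sub_pp_pow_ne_zero _ (Nat.succ_ne_zero k))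
    (by simpa using one_sub_pp_pow_ne_zero 1 one_ne_zero)

lemma qFact_ne_zero (k : ℕ) : qFact pp k ≠ 0 :=
  Finset.prod_ne_zero_iff.mpr fun j _ => qNum_ne_zero j

lemma d_ne_zero : qq - qq⁻¹ ≠ 0 := by
  intro h
  have hq := qq_ne_zero
  have h1 : qq = qq⁻¹ := sub_eq_zero.mp h
  have h2 : qq * qq = 1 := by
    nth_rewrite 2 [h1]
    exact mul_inv_cancel₀ hq
  exact qq_pow_ne_one 2 (by norm_num) (by rw [pow_two]; exact h2)

lemma qNum_add (a b : ℕ) : qNum pp (a + b) = qNum pp a + pp ^ a * qNum pp b := by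
  unfold qNum
  rw [← mul_div_assoc, ← add_div]
  congr 1
  ring

/-- recursively defined Gaussian binomial -/
def gb : ℕ → ℕ → Kq
  | _, 0 => 1
  | 0, _ + 1 => 0
  | n + 1, k + 1 => gb n k + pp ^ (k + 1) * gb n (k + 1)

lemma gb_zero_right (n : ℕ) : gb n 0 = 1 := by cases n <;> rfl

lemma gb_eq_zero : ∀ n k, n < k → gb n k = 0 := by
  intro n
  induction n with
  | zero => intro k hk; match k, hk with | k + 1, _ => rfl
  | succ n ih =>
    intro k hk
    match k, hk with
    | k + 1, hk =>
      show gb n k + pp ^ (k + 1) * gb n (k + 1) = 0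
      rw [ih k (by omega), ih (k + 1) (by omega), mul_zero, add_zero]

lemma qFact_succ (k : ℕ) : qFact pp (k + 1) = qFact pp k * qNum pp (k + 1) := by
  unfold qFact; rw [Finset.prod_range_succ]

lemma qFact_zero : qFact pp 0 = 1 := by simp [qFact]

lemma gb_mul_fact : ∀ n k, k ≤ n → gb n k * (qFact pp k * qFact pp (n - k)) = qFact pp n := by
  intro n
  induction n with
  | zero => intro k hk; interval_cases k; simp [gb_zero_right, qFact_zero]
  | succ n ih =>
    intro k hk
    match k with
    | 0 => simp [gb_zero_right, qFact_zero]
    | k + 1 =>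
      show (gb n k + pp ^ (k + 1) * gb n (k + 1)) * _ = _
      rcases Nat.lt_or_ge n (k + 1) with h | h
      · -- k = n
        have hkn : k = n := by omega
        subst hkn
        rw [gb_eq_zero k (k + 1) (by omega), mul_zero, add_zero, Nat.sub_self,
          qFact_zero, mul_one]
        have h1 := ih k le_rfl
        rw [Nat.sub_self, qFact_zero, mul_one] at h1
        rw [qFact_succ, ← mul_assoc, h1]
      · have h1 := ih k (by omega)
        have h2 := ih (k + 1) h
        have e1 : n + 1 - (k + 1) = n - (k + 1) + 1 := by omega
        have e2 : n - k = n - (k + 1) + 1 := by omega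
        rw [e1, qFact_succ n, qFact_succ k, qFact_succ (n - (k + 1))]
        rw [e2, qFact_succ (n - (k + 1))] at h1
        rw [qFact_succ k] at h2
        have e6 : qNum pp (n + 1)
            = qNum pp (k + 1) + pp ^ (k + 1) * qNum pp (n - (k + 1) + 1) := by
          have e7 : n + 1 = (k + 1) + (n - (k + 1) + 1) := by omega
          rw [e7, qNum_add]
        rw [e6]
        linear_combination qNum pp (k + 1) * h1
          + pp ^ (k + 1) * qNum pp (n - (k + 1) + 1) * h2

section Binomial
variable {A : Type} [Ring A] [Algebra Kq A] (u v : A)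

lemma v_mul_upow (huv : u * v = (qq ^ 2) • (v * u)) (k : ℕ) :
    v * u ^ k = pp ^ k • (u ^ k * v) := by
  have hvu : v * u = pp • (u * v) := by
    have h2 : (qq ^ 2) ≠ 0 := pow_ne_zero _ qq_ne_zero
    rw [huv, smul_smul, inv_mul_cancel₀ h2, one_smul]
  induction k with
  | zero => simp
  | succ k ih =>
    rw [pow_succ, ← mul_assoc, ih, smul_mul_assoc, mul_assoc, hvu, mul_smul_comm,
      smul_smul, pow_succ, ← mul_assoc, mul_assoc (u ^ k)]

lemma q_add_pow (huv : u * v = (qq ^ 2) • (v * u)) (n : ℕ) :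
    (u + v) ^ n = ∑ k ∈ Finset.range (n + 1), gb n k • (u ^ k * v ^ (n - k)) := by
  induction n with
  | zero => simp [gb_zero_right]
  | succ n ih =>
    rw [pow_succ', ih, Finset.mul_sum]
    have expand : ∀ k ∈ Finset.range (n + 1),
        (u + v) * (gb n k • (u ^ k * v ^ (n - k))) =
        gb n k • (u ^ (k + 1) * v ^ (n - k)) +
          (pp ^ k * gb n k) • (u ^ k * v ^ (n - k + 1)) := by
      intro k hk
      rw [add_mul, mul_smul_comm, mul_smul_comm, ← mul_assoc, ← mul_assoc, ← pow_succ',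
        v_mul_upow u v huv k, smul_mul_assoc, smul_smul, mul_assoc, ← pow_succ',
        mul_comm (gb n k) (pp ^ k)]
    rw [Finset.sum_congr rfl expand, Finset.sum_add_distrib]
    have fix2 : ∑ k ∈ Finset.range (n + 1), (pp ^ k * gb n k) • (u ^ k * v ^ (n - k + 1)) =
        ∑ k ∈ Finset.range (n + 1), (pp ^ k * gb n k) • (u ^ k * v ^ (n + 1 - k)) := by
      refine Finset.sum_congr rfl fun k hk => ?_
      have hle : k ≤ n := Nat.lt_succ_iff.mp (Finset.mem_range.mp hk)
      have e : n - k + 1 = n + 1 - k := by omega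
      rw [e]
    rw [fix2]
    rw [Finset.sum_range_succ' (fun k => gb (n + 1) k • (u ^ k * v ^ (n + 1 - k))) (n + 1),
      Finset.sum_range_succ' (fun k => (pp ^ k * gb n k) • (u ^ k * v ^ (n + 1 - k))) n]
    have ext : ∑ j ∈ Finset.range (n + 1),
          (pp ^ (j + 1) * gb n (j + 1)) • (u ^ (j + 1) * v ^ (n + 1 - (j + 1))) =
        ∑ j ∈ Finset.range n,
          (pp ^ (j + 1) * gb n (j + 1)) • (u ^ (j + 1) * v ^ (n + 1 - (j + 1))) := by
      rw [Finset.sum_range_succ, gb_eq_zero n (n + 1) (by omega)]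
      simp
    rw [← ext, gb_zero_right, gb_zero_right]
    simp only [pow_zero, one_mul, one_smul, Nat.sub_zero]
    rw [← add_assoc]
    congr 1
    rw [← Finset.sum_add_distrib]
    refine Finset.sum_congr rfl fun k hk => ?_
    have e1 : n + 1 - (k + 1) = n - k := by omega
    rw [e1]
    show gb n k • _ + (pp ^ (k + 1) * gb n (k + 1)) • _ =
      (gb n k + pp ^ (k + 1) * gb n (k + 1)) • _
    rw [add_smul]

end Binomial

theorem quantum_exponential_relation {A : Type} [Ring A] [Algebra Kq A]
    (u v : A) (huv : u * v = (qq ^ 2) • (v * u)) :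
    qExp u * qExp v = qExp (u + v) := by
  ext n
  rw [PowerSeries.coeff_mul]
  simp only [qExp, PowerSeries.coeff_mk]
  rw [Finset.Nat.sum_antidiagonal_eq_sum_range_succ_mk]
  rw [q_add_pow u v huv n, Finset.smul_sum]
  apply Finset.sum_congr rfl
  intro k hk
  have hle : k ≤ n := Nat.lt_succ_iff.mp (Finset.mem_range.mp hk)
  rw [smul_mul_assoc, mul_smul_comm, smul_smul, smul_smul]
  congr 1
  -- scalar identity
  show qExpCoeff k * qExpCoeff (n - k) = qExpCoeff n * gb n k
  have hg := gb_mul_fact n k hle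
  have hd : (qq - qq⁻¹) ^ k * (qq - qq⁻¹) ^ (n - k) = (qq - qq⁻¹) ^ n := by
    rw [← pow_add]
    congr 1
    omega
  have h3 : qFact pp n ≠ 0 := qFact_ne_zero n
  have h4 : (qq - qq⁻¹) ^ n ≠ 0 := pow_ne_zero _ d_ne_zero
  have hc : qExpCoeff k = (qFact pp k * (qq - qq⁻¹) ^ k)⁻¹ := rfl
  have hc2 : qExpCoeff (n - k) = (qFact pp (n - k) * (qq - qq⁻¹) ^ (n - k))⁻¹ := rfl
  have hc3 : qExpCoeff n = (qFact pp n * (qq - qq⁻¹) ^ n)⁻¹ := rfl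
  rw [hc, hc2, hc3, ← mul_inv]
  refine inv_eq_of_mul_eq_one_right ?_
  have key : qFact pp k * (qq - qq⁻¹) ^ k * (qFact pp (n - k) * (qq - qq⁻¹) ^ (n - k))
      * gb n k = qFact pp n * (qq - qq⁻¹) ^ n := by
    linear_combination ((qq - qq⁻¹) ^ k * (qq - qq⁻¹) ^ (n - k)) * hg
      + qFact pp n * hd
  rw [mul_comm ((qFact pp n * (qq - qq⁻¹) ^ n)⁻¹) (gb n k), ← mul_assoc, key]
  exact mul_inv_cancel₀ (mul_ne_zero h3 h4)

end
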